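/- arXiv:2207.12088 — 6 statements merged into one kernel-verified Lean document; each statement's English description precedes it below -/
import Mathlib

section
/- For all real x ≠ 0, x·coth(x) = 1 + Σ_{k=1}^∞ 2x²/(x² + k²π²) (Mittag-Leffler expansion of the hyperbolic cotangent). -/
open Real

noncomputable def rcoth (x : ℝ) : ℝ := Real.cosh x / Real.sinh x

open MeasureTheory intervalIntegral
noncomputable def mlH (x a : ℝ) : ℝ → ℂ := fun t =>
  (Complex.exp (-x) * Complex.exp (a * t) + Complex.exp x * Complex.exp (-a * t)) / 2

lemma hfour (T : ℝ) (hT : T = 2 * π) (n : ℤ) (t : ℝ) :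
    (fourier (-n) (t : AddCircle T) : ℂ) = Complex.exp ((-n * Complex.I) * t) := by
  rw [fourier_coe_apply]
  congr 1
  rw [hT]
  have hπ : (π : ℂ) ≠ 0 := Complex.ofReal_ne_zero.mpr Real.pi_ne_zero
  push_cast
  field_simp

lemma key_int (n : ℤ) (c : ℂ) (hc : c.re ≠ 0) :
    (∫ t in (0:ℝ)..(2*π), Complex.exp (-n * Complex.I * t) * Complex.exp (c * t))
      = (Complex.exp (c * (2*π)) - 1) / (c - n * Complex.I) := by
  have hc0 : c - n * Complex.I ≠ 0 := by
    intro h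
    apply hc
    have := congrArg Complex.re h
    simpa using this
  have : ∀ t : ℝ, Complex.exp (-n * Complex.I * t) * Complex.exp (c * t)
      = Complex.exp ((c - n * Complex.I) * t) := by
    intro t; rw [← Complex.exp_add]; ring_nf
  rw [intervalIntegral.integral_congr (fun t _ => this t), integral_exp_mul_complex hc0]
  congr 1
  have h2 : (c - n*Complex.I) * ((2*π:ℝ):ℂ) = c*(2*(π:ℂ)) + ((-n : ℤ):ℂ) * (2*π*Complex.I) := by
    push_cast; ring
  rw [h2, Complex.exp_add, Complex.exp_int_mul_two_pi_mul_I, mul_one]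
  norm_num

lemma mlH_coeff (x a : ℝ) (ha : 0 < a) (hax : a * π = x) (n : ℤ)
    (hab : (0:ℝ) < 0 + 2 * π) :
    fourierCoeffOn hab (mlH x a) n
      = ((Real.sinh x * x / (x ^ 2 + (n:ℝ) ^ 2 * π ^ 2) : ℝ) : ℂ) := by
  have hpi := Real.pi_pos
  have hx : 0 < x := by rw [← hax]; positivity
  rw [fourierCoeffOn_eq_integral]
  simp only [zero_add, sub_zero]
  simp only [hfour (2*π) rfl, hfour (0+2*π-0) (by ring), smul_eq_mul, mlH]
  have hint : ∀ c : ℂ, IntervalIntegrable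
      (fun t : ℝ => Complex.exp (-n * Complex.I * t) * Complex.exp (c * t)) volume 0 (2*π) := by
    intro c
    apply Continuous.intervalIntegrable
    fun_prop
  have split : (∫ t in (0:ℝ)..(2*π), Complex.exp (-n * Complex.I * t) *
        ((Complex.exp (-x) * Complex.exp (a * t) + Complex.exp x * Complex.exp (-a * t)) / 2))
      = (Complex.exp (-x) * ∫ t in (0:ℝ)..(2*π), Complex.exp (-n * Complex.I * t) * Complex.exp ((a:ℂ) * t)) / 2
        + (Complex.exp x * ∫ t in (0:ℝ)..(2*π), Complex.exp (-n * Complex.I * t) * Complex.exp ((-(a:ℂ)) * t)) / 2 := by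
    rw [← add_div, ← intervalIntegral.integral_const_mul, ← intervalIntegral.integral_const_mul,
      ← intervalIntegral.integral_add ((hint _).const_mul _) ((hint _).const_mul _),
      ← intervalIntegral.integral_div]
    apply intervalIntegral.integral_congr
    intro t _
    push_cast
    ring
  rw [split, key_int n (a:ℂ) (by simpa using ha.ne'),
    key_int n (-(a:ℂ)) (by simpa using ha.ne')]
  have h2x : ((a:ℂ)) * (2*(π:ℝ)) = 2 * x := by
    push_cast [← hax]; ring
  have h2x' : (-(a:ℂ)) * (2*(π:ℝ)) = -(2 * x) := by
    push_cast [← hax]; ring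
  rw [h2x, h2x']
  have hc1 : ((a:ℂ) - n * Complex.I) ≠ 0 := by
    intro h; have := congrArg Complex.re h; simp at this; exact ha.ne' this
  have hc1' : ((a:ℂ) + n * Complex.I) ≠ 0 := by
    intro h; have := congrArg Complex.re h; simp at this; exact ha.ne' this
  have hE : Complex.exp (2 * (x:ℂ)) = Complex.exp (x:ℂ) * Complex.exp (x:ℂ) := by
    rw [← Complex.exp_add]; ring_nf
  have hEn : Complex.exp (-(2 * (x:ℂ))) = Complex.exp (-(x:ℂ)) * Complex.exp (-(x:ℂ)) := by
    rw [← Complex.exp_add]; ring_nf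
  have hinv : Complex.exp (-(x:ℂ)) * Complex.exp (x:ℂ) = 1 := by
    rw [← Complex.exp_add]; simp
  have hinv' : Complex.exp (x:ℂ) * Complex.exp (-(x:ℂ)) = 1 := by
    rw [← Complex.exp_add]; simp
  have e1 : Complex.exp (-(x:ℂ)) * (Complex.exp (2*(x:ℂ)) - 1)
      = Complex.exp (x:ℂ) - Complex.exp (-(x:ℂ)) := by
    rw [hE, mul_sub, ← mul_assoc, hinv, one_mul, mul_one]
  have e2 : Complex.exp (x:ℂ) * (Complex.exp (-(2*(x:ℂ))) - 1)
      = Complex.exp (-(x:ℂ)) - Complex.exp (x:ℂ) := by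
    rw [hEn, mul_sub, ← mul_assoc, hinv', one_mul, mul_one]
  have hsinh : ((Real.sinh x : ℝ) : ℂ) = (Complex.exp (x:ℂ) - Complex.exp (-(x:ℂ))) / 2 := by
    rw [Real.sinh_eq]; push_cast; ring
  have ha' : (a:ℂ) * (π:ℂ) = (x:ℂ) := by push_cast [← hax]; ring
  have hπ : (π:ℂ) ≠ 0 := Complex.ofReal_ne_zero.mpr Real.pi_ne_zero
  have hneg : (-(a:ℂ) - n * Complex.I) = -((a:ℂ) + n * Complex.I) := by ring
  rw [mul_div_assoc', e1, mul_div_assoc', e2, hneg, div_neg, ← neg_div, neg_sub]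
  set s : ℂ := Complex.exp (x:ℂ) - Complex.exp (-(x:ℂ)) with hs
  have hprod : ((a:ℂ) - n*Complex.I) * ((a:ℂ) + n*Complex.I) = (a:ℂ)^2 + (n:ℂ)^2 := by
    linear_combination (-(n:ℂ)^2) * Complex.I_sq
  have hsq : ((a:ℂ)^2 + (n:ℂ)^2) ≠ 0 := hprod ▸ mul_ne_zero hc1 hc1'
  rw [← add_div, div_add_div _ _ hc1 hc1', hprod]
  rw [Complex.real_smul, Complex.ofReal_div]
  push_cast
  rw [← Complex.ofReal_sinh, hsinh, ← ha']
  have hfac : ((a:ℂ)*(π:ℂ))^2 + (n:ℂ)^2*(π:ℂ)^2 = (π:ℂ)^2 * ((a:ℂ)^2+(n:ℂ)^2) := by ring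
  rw [hfac]
  field_simp
  ring

lemma ml_summable (x : ℝ) : Summable (fun n : ℕ => x ^ 2 / (x ^ 2 + (n : ℝ) ^ 2 * π ^ 2)) := by
  have hpi := Real.pi_pos
  rw [← summable_nat_add_iff 1]
  have hb : Summable (fun n : ℕ => x ^ 2 / π ^ 2 * (1 / ((n : ℝ) + 1) ^ 2)) := by
    apply Summable.mul_left
    have := (summable_nat_add_iff (f := fun n : ℕ => 1 / (n : ℝ) ^ 2) 1).mpr
      (Real.summable_one_div_nat_pow.mpr one_lt_two)
    simpa using this
  apply Summable.of_nonneg_of_le _ _ hb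
  · intro n; positivity
  · intro n
    push_cast
    calc x^2/(x^2+((n:ℝ)+1)^2*π^2) ≤ x^2/(((n:ℝ)+1)^2*π^2) := by
          apply div_le_div_of_nonneg_left (by positivity) (by positivity)
          nlinarith [sq_nonneg x]
      _ = x^2/π^2 * (1/((n:ℝ)+1)^2) := by
          field_simp

lemma sinh_summable (x : ℝ) (hx : x ≠ 0) :
    Summable (fun n : ℤ => Real.sinh x * x / (x ^ 2 + (n : ℝ) ^ 2 * π ^ 2)) := by
  have hnat : Summable (fun n : ℕ => Real.sinh x * x / (x ^ 2 + (n : ℝ) ^ 2 * π ^ 2)) := by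
    have := (ml_summable x).mul_left (Real.sinh x / x)
    apply this.congr
    intro n
    field_simp
  refine Summable.of_nat_of_neg_add_one (hnat.congr fun n => by push_cast; ring) ?_
  have h1 : Summable (fun n : ℕ => Real.sinh x * x / (x ^ 2 + ((n:ℝ)+1) ^ 2 * π ^ 2)) := by
    have h2 := (summable_nat_add_iff 1).mpr hnat
    apply h2.congr
    intro n
    push_cast
    ring_nf
  apply h1.congr
  intro n
  push_cast
  ring_nf

lemma hasSum_ml (x : ℝ) (hx : 0 < x) :
    HasSum (fun n : ℤ => x ^ 2 / (x ^ 2 + (n : ℝ) ^ 2 * π ^ 2)) (x * rcoth x) := by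
  have hpi := Real.pi_pos
  haveI : Fact ((0:ℝ) < 2 * π) := ⟨by positivity⟩
  set a : ℝ := x / π with hadef
  have ha : 0 < a := by positivity
  have hax : a * π = x := div_mul_cancel₀ x Real.pi_ne_zero
  have h2x : ((a:ℂ)) * ((2*π:ℝ):ℂ) = 2 * (x:ℂ) := by push_cast [← hax]; ring
  have h0 : mlH x a 0 = mlH x a (2 * π) := by
    simp only [mlH]
    congr 1
    push_cast
    have e1 : (a:ℂ) * (2*(π:ℂ)) = 2 * (x:ℂ) := by push_cast [← hax]; ring
    have e2 : -(a:ℂ) * (2*(π:ℂ)) = -(2 * (x:ℂ)) := by push_cast [← hax]; ring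
    rw [e1, e2]
    norm_num
    rw [← Complex.exp_add, ← Complex.exp_add, show -(x:ℂ) + 2*(x:ℂ) = (x:ℂ) by ring,
      show (x:ℂ) + -(2*(x:ℂ)) = -(x:ℂ) by ring]
    ring
  let F : C(AddCircle (2*π), ℂ) := ⟨AddCircle.liftIco (2*π) 0 (mlH x a),
    AddCircle.liftIco_zero_continuous h0 (Continuous.continuousOn (by unfold mlH; fun_prop))⟩
  have hFcoeff : ∀ n : ℤ, fourierCoeff (F : AddCircle (2*π) → ℂ) n
      = ((Real.sinh x * x / (x^2 + (n:ℝ)^2*π^2) : ℝ) : ℂ) := by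
    intro n
    have h1 : fourierCoeff (F : AddCircle (2*π) → ℂ) n
        = fourierCoeff (AddCircle.liftIco (2*π) 0 (mlH x a)) n := rfl
    rw [h1, fourierCoeff_liftIco_eq, mlH_coeff x a ha hax n]
  have hsumm : Summable (fourierCoeff (F : AddCircle (2*π) → ℂ)) := by
    have : Summable (fun n : ℤ => ((Real.sinh x * x / (x^2 + (n:ℝ)^2*π^2) : ℝ) : ℂ)) :=
      ⟨_, Complex.hasSum_ofReal.mpr (sinh_summable x hx.ne').hasSum⟩
    exact this.congr (fun n => (hFcoeff n).symm)
  have HS := has_pointwise_sum_fourier_series_of_summable hsumm (0 : AddCircle (2*π))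
  simp only [fourier_eval_zero, smul_eq_mul, mul_one, hFcoeff] at HS
  have hF0 : F (0 : AddCircle (2*π)) = ((Real.cosh x : ℝ) : ℂ) := by
    show AddCircle.liftIco (2*π) 0 (mlH x a) ((0:ℝ) : AddCircle (2*π)) = _
    rw [AddCircle.liftIco_coe_apply (by constructor <;> simp [hpi.le]; positivity)]
    simp only [mlH]
    rw [Real.cosh_eq]
    push_cast
    norm_num
    ring
  rw [hF0] at HS
  have HSR : HasSum (fun n : ℤ => Real.sinh x * x / (x^2+(n:ℝ)^2*π^2)) (Real.cosh x) :=
    Complex.hasSum_ofReal.mp HS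
  have hsinh0 : Real.sinh x ≠ 0 := ne_of_gt (Real.sinh_pos_iff.mpr hx)
  have hmul := HSR.mul_left (x / Real.sinh x)
  have heq : (fun n : ℤ => x^2/(x^2+(n:ℝ)^2*π^2))
      = fun n : ℤ => (x/Real.sinh x) * (Real.sinh x * x/(x^2+(n:ℝ)^2*π^2)) := by
    funext n
    field_simp
  have hval : x * rcoth x = (x/Real.sinh x) * Real.cosh x := by
    rw [rcoth]; field_simp
  rw [heq, hval]
  exact hmul

lemma ml_pos (x : ℝ) (hx : 0 < x) :
    x * rcoth x = 1 + ∑' k : ℕ, 2 * x ^ 2 / (x ^ 2 + ((k : ℝ) + 1) ^ 2 * π ^ 2) := by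
  have H := hasSum_ml x hx
  set q : ℕ → ℝ := fun k => x ^ 2 / (x ^ 2 + ((k:ℝ) + 1) ^ 2 * π ^ 2) with hqdef
  have hq : Summable q := by
    have h2 := (summable_nat_add_iff 1).mpr (ml_summable x)
    apply h2.congr
    intro n
    simp only [hqdef]
    push_cast
    ring_nf
  have hs : Summable (fun n : ℕ => x ^ 2 / (x ^ 2 + ((n:ℤ):ℝ) ^ 2 * π ^ 2)) :=
    (ml_summable x).congr (fun n => by push_cast; ring_nf)
  have hnat : HasSum (fun n : ℕ => x ^ 2 / (x ^ 2 + ((n:ℤ):ℝ) ^ 2 * π ^ 2)) (1 + ∑' k, q k) := by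
    rw [hs.hasSum_iff, hs.tsum_eq_zero_add]
    congr 1
    · norm_num
      exact hx.ne'
    · apply tsum_congr
      intro k
      simp only [hqdef]
      push_cast
      ring_nf
  have hneg : HasSum (fun n : ℕ => x ^ 2 / (x ^ 2 + (((-(n+1)):ℤ):ℝ) ^ 2 * π ^ 2)) (∑' k, q k) := by
    have heq : (fun n : ℕ => x ^ 2 / (x ^ 2 + (((-(n+1)):ℤ):ℝ) ^ 2 * π ^ 2)) = q := by
      funext n
      simp only [hqdef]
      push_cast
      ring_nf
    rw [heq]
    exact hq.hasSum
  have Hsplit : HasSum (fun n : ℤ => x ^ 2 / (x ^ 2 + (n:ℝ) ^ 2 * π ^ 2)) ((1 + ∑' k, q k) + ∑' k, q k) :=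
    HasSum.of_nat_of_neg_add_one hnat hneg
  rw [H.unique Hsplit]
  have h2 : ∀ k : ℕ, 2 * x ^ 2 / (x ^ 2 + ((k:ℝ) + 1) ^ 2 * π ^ 2) = 2 * q k := fun k => by
    simp only [hqdef]; ring
  rw [tsum_congr h2, tsum_mul_left]
  ring

theorem mittag_leffler_coth (x : ℝ) (hx : x ≠ 0) :
    x * rcoth x = 1 + ∑' k : ℕ, 2 * x ^ 2 / (x ^ 2 + ((k : ℝ) + 1) ^ 2 * π ^ 2) := by
  rcases hx.lt_or_gt with hneg | hpos
  · have h := ml_pos (-x) (by linarith)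
    have hrc : rcoth (-x) = -rcoth x := by
      simp [rcoth, Real.cosh_neg, Real.sinh_neg, div_neg]
    rw [hrc] at h
    simpa using h
  · exact ml_pos x hpos
end

section
/- For every δ > 0 and nonzero real n, the quantity L_δ(n) := (3/δ)(n·coth(δn) − 1/δ) satisfies 0 < L_δ(n) < n². -/
open Real

noncomputable def Ld (δ n : ℝ) : ℝ := (3 / δ) * (n * rcoth (δ * n) - 1 / δ)

lemma aux1 : ∀ x : ℝ, 0 < x → Real.sinh x < x * Real.cosh x := by
  intro x hx
  have h : StrictMonoOn (fun y : ℝ => y * Real.cosh y - Real.sinh y) (Set.Ici 0) := by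
    apply strictMonoOn_of_deriv_pos (convex_Ici 0)
    · fun_prop
    · intro y hy
      rw [interior_Ici] at hy
      have : HasDerivAt (fun y : ℝ => y * Real.cosh y - Real.sinh y)
          (1 * Real.cosh y + y * Real.sinh y - Real.cosh y) y := by
        exact ((hasDerivAt_id y).mul (Real.hasDerivAt_cosh y)).sub (Real.hasDerivAt_sinh y)
      rw [this.deriv]
      have h0 := Real.sinh_pos_iff.2 hy
      nlinarith [mul_pos (Set.mem_Ioi.1 hy) h0]
  have := h (Set.self_mem_Ici) (Set.mem_Ici.2 hx.le) hx
  simp at this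
  linarith

lemma aux2 : ∀ x : ℝ, 0 < x → 3 * (x * Real.cosh x) < (3 + x ^ 2) * Real.sinh x := by
  intro x hx
  have h : StrictMonoOn (fun y : ℝ => (3 + y ^ 2) * Real.sinh y - 3 * (y * Real.cosh y))
      (Set.Ici 0) := by
    apply strictMonoOn_of_deriv_pos (convex_Ici 0)
    · fun_prop
    · intro y hy
      rw [interior_Ici] at hy
      have hd : HasDerivAt (fun y : ℝ => (3 + y ^ 2) * Real.sinh y - 3 * (y * Real.cosh y))
          ((0 + 2 * y ^ 1) * Real.sinh y + (3 + y ^ 2) * Real.cosh y -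
            3 * (1 * Real.cosh y + y * Real.sinh y)) y := by
        exact (((hasDerivAt_const y (3:ℝ)).add ((hasDerivAt_pow 2 y))).mul
          (Real.hasDerivAt_sinh y)).sub
          (((hasDerivAt_id y).mul (Real.hasDerivAt_cosh y)).const_mul 3)
      rw [hd.deriv]
      have h1 := aux1 y hy
      nlinarith [mul_lt_mul_of_pos_left h1 hy]
  have := h (Set.self_mem_Ici) (Set.mem_Ici.2 hx.le) hx
  simp at this
  linarith

lemma key : ∀ x : ℝ, 0 < x →
    0 < x * rcoth x - 1 ∧ 3 * (x * rcoth x - 1) < x ^ 2 := by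
  intro x hx
  have hs := Real.sinh_pos_iff.2 hx
  have h1 := aux1 x hx
  have h2 := aux2 x hx
  have key' : x * rcoth x - 1 = (x * Real.cosh x - Real.sinh x) / Real.sinh x := by
    unfold rcoth; field_simp
  rw [key']
  constructor
  · exact div_pos (by linarith) hs
  · rw [mul_div_assoc', div_lt_iff₀ hs]
    nlinarith

theorem Ld_bounds (δ n : ℝ) (hδ : 0 < δ) (hn : n ≠ 0) :
    0 < Ld δ n ∧ Ld δ n < n ^ 2 := by
  have habs : n * rcoth (δ * n) = |n| * rcoth (δ * |n|) := by
    rcases abs_choice n with h | h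
    · rw [h]
    · rw [h]; unfold rcoth
      rw [show δ * -n = -(δ * n) by ring, Real.cosh_neg, Real.sinh_neg]
      field_simp
  have hx : 0 < δ * |n| := mul_pos hδ (abs_pos.2 hn)
  obtain ⟨k1, k2⟩ := key (δ * |n|) hx
  have hLd : Ld δ n = (3 / δ ^ 2) * (δ * |n| * rcoth (δ * |n|) - 1) := by
    unfold Ld
    rw [habs]
    field_simp
  have hδ2 : (0:ℝ) < 3 / δ ^ 2 := by positivity
  constructor
  · rw [hLd]; exact mul_pos hδ2 k1
  · rw [hLd]
    have : (3 / δ ^ 2) * (δ * |n| * rcoth (δ * |n|) - 1) < (3 / δ ^ 2) * ((δ * |n|) ^ 2 / 3) := by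
      apply mul_lt_mul_of_pos_left _ hδ2
      linarith
    calc (3 / δ ^ 2) * (δ * |n| * rcoth (δ * |n|) - 1)
        < (3 / δ ^ 2) * ((δ * |n|) ^ 2 / 3) := this
      _ = |n| ^ 2 := by field_simp
      _ = n ^ 2 := sq_abs n
end

section
/- For every fixed nonzero real n, L_δ(n) = (3/δ)(n·coth(δn) − 1/δ) increases to n² as δ decreases to 0. -/
open Real Filter

lemma sinh_lt_mul_cosh {t : ℝ} (ht : 0 < t) : Real.sinh t < t * Real.cosh t := by
  have h : StrictMonoOn (fun t : ℝ => t * Real.cosh t - Real.sinh t) (Set.Ici 0) := by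
    apply strictMonoOn_of_deriv_pos (convex_Ici 0)
    · fun_prop
    · intro x hx
      rw [interior_Ici] at hx
      have hx' : (0:ℝ) < x := hx
      have hd : HasDerivAt (fun t : ℝ => t * Real.cosh t - Real.sinh t)
          (1 * Real.cosh x + x * Real.sinh x - Real.cosh x) x :=
        ((hasDerivAt_id x).mul (Real.hasDerivAt_cosh x)).sub (Real.hasDerivAt_sinh x)
      rw [hd.deriv]
      have hs := Real.sinh_pos_iff.2 hx'
      nlinarith [mul_pos hx' hs]
  have h0 := h Set.self_mem_Ici (Set.mem_Ici.2 ht.le) ht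
  simp at h0
  linarith

noncomputable def psi (t : ℝ) : ℝ :=
  2 * Real.sinh t ^ 2 - t * Real.sinh t * Real.cosh t - t ^ 2

lemma hasDerivAt_psiD (x : ℝ) :
    HasDerivAt (fun t : ℝ => 3 * (Real.sinh t * Real.cosh t)
        - t * (Real.sinh t ^ 2 + Real.cosh t ^ 2) - 2 * t)
      (4 * Real.sinh x * (Real.sinh x - x * Real.cosh x)) x := by
  have h1 : HasDerivAt (fun t : ℝ => 3 * (Real.sinh t * Real.cosh t)
        - t * (Real.sinh t ^ 2 + Real.cosh t ^ 2) - 2 * t)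
      (3 * (Real.cosh x * Real.cosh x + Real.sinh x * Real.sinh x)
        - (1 * (Real.sinh x ^ 2 + Real.cosh x ^ 2)
          + x * (2 * Real.sinh x ^ 1 * Real.cosh x + 2 * Real.cosh x ^ 1 * Real.sinh x))
        - 2 * 1) x :=
    ((((Real.hasDerivAt_sinh x).mul (Real.hasDerivAt_cosh x)).const_mul 3).sub
      ((hasDerivAt_id x).mul (((Real.hasDerivAt_sinh x).pow 2).add
        ((Real.hasDerivAt_cosh x).pow 2)))).sub ((hasDerivAt_id x).const_mul 2)
  convert h1 using 1
  have hc : Real.cosh x ^ 2 = 1 + Real.sinh x ^ 2 := by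
    have := Real.cosh_sq_sub_sinh_sq x; linarith
  nlinarith [hc]

lemma psiD_neg {t : ℝ} (ht : 0 < t) :
    3 * (Real.sinh t * Real.cosh t) - t * (Real.sinh t ^ 2 + Real.cosh t ^ 2) - 2 * t < 0 := by
  have h : StrictAntiOn (fun t : ℝ => 3 * (Real.sinh t * Real.cosh t)
      - t * (Real.sinh t ^ 2 + Real.cosh t ^ 2) - 2 * t) (Set.Ici 0) := by
    apply strictAntiOn_of_deriv_neg (convex_Ici 0)
    · fun_prop
    · intro x hx
      rw [interior_Ici] at hx
      rw [(hasDerivAt_psiD x).deriv]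
      have hx' : (0:ℝ) < x := hx
      have hs := Real.sinh_pos_iff.2 hx'
      have := sinh_lt_mul_cosh hx'
      nlinarith
  have h0 := h Set.self_mem_Ici (Set.mem_Ici.2 ht.le) ht
  simpa using h0

lemma hasDerivAt_psi (x : ℝ) :
    HasDerivAt psi (3 * (Real.sinh x * Real.cosh x)
      - x * (Real.sinh x ^ 2 + Real.cosh x ^ 2) - 2 * x) x := by
  have hpow : HasDerivAt (fun t : ℝ => t ^ 2) (2 * x) x := by
    simpa using hasDerivAt_pow 2 x
  have h1 : HasDerivAt psi
      (2 * (2 * Real.sinh x ^ 1 * Real.cosh x)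
        - ((1 * Real.sinh x + x * Real.cosh x) * Real.cosh x
          + x * Real.sinh x * Real.sinh x) - 2 * x) x :=
    ((((Real.hasDerivAt_sinh x).pow 2).const_mul 2).sub
      ((((hasDerivAt_id x).mul (Real.hasDerivAt_sinh x)).mul (Real.hasDerivAt_cosh x)))).sub
      hpow
  convert h1 using 1
  have hc : Real.cosh x ^ 2 = 1 + Real.sinh x ^ 2 := by
    have := Real.cosh_sq_sub_sinh_sq x; linarith
  nlinarith [hc]

lemma psi_neg {t : ℝ} (ht : t ≠ 0) : psi t < 0 := by
  have key : ∀ u : ℝ, 0 < u → psi u < 0 := by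
    intro u hu
    have h : StrictAntiOn psi (Set.Ici 0) := by
      apply strictAntiOn_of_deriv_neg (convex_Ici 0)
      · unfold psi; fun_prop
      · intro x hx
        rw [interior_Ici] at hx
        rw [(hasDerivAt_psi x).deriv]
        exact psiD_neg hx
    have h0 := h Set.self_mem_Ici (Set.mem_Ici.2 hu.le) hu
    simpa [psi] using h0
  rcases ht.lt_or_gt with h | h
  · have e : psi (-t) = psi t := by
      simp only [psi, Real.sinh_neg, Real.cosh_neg]; ring
    have h2 := key (-t) (by linarith)
    rw [e] at h2; exact h2
  · exact key t h

lemma sinh_ne {t : ℝ} (ht : t ≠ 0) : Real.sinh t ≠ 0 := by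
  rcases ht.lt_or_gt with h | h
  · exact ne_of_lt (Real.sinh_neg_iff.2 h)
  · exact ne_of_gt (Real.sinh_pos_iff.2 h)

lemma hasDerivAt_Ld (n : ℝ) {δ : ℝ} (hδ : δ ≠ 0) (htn : δ * n ≠ 0) :
    HasDerivAt (fun δ : ℝ => Ld δ n)
      (3 * psi (δ * n) / (δ ^ 3 * Real.sinh (δ * n) ^ 2)) δ := by
  have hs := sinh_ne htn
  have h1 : HasDerivAt (fun δ : ℝ => δ * n) n δ := by
    simpa using (hasDerivAt_id δ).mul_const n
  have hsinh : HasDerivAt (fun δ : ℝ => Real.sinh (δ * n)) (Real.cosh (δ * n) * n) δ :=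
    by have := (Real.hasDerivAt_sinh (δ * n)).comp δ h1; exact this
  have hcosh : HasDerivAt (fun δ : ℝ => Real.cosh (δ * n)) (Real.sinh (δ * n) * n) δ :=
    by have := (Real.hasDerivAt_cosh (δ * n)).comp δ h1; exact this
  have hq : HasDerivAt (fun δ : ℝ => Real.cosh (δ * n) / Real.sinh (δ * n))
      ((Real.sinh (δ * n) * n * Real.sinh (δ * n)
        - Real.cosh (δ * n) * (Real.cosh (δ * n) * n)) / Real.sinh (δ * n) ^ 2) δ :=
    hcosh.div hsinh hs
  have hinv : HasDerivAt (fun δ : ℝ => 3 / δ) (3 * (-(δ ^ 2)⁻¹)) δ := by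
    simpa [div_eq_mul_inv] using (hasDerivAt_inv hδ).const_mul 3
  have hinv1 : HasDerivAt (fun δ : ℝ => 1 / δ) (-(δ ^ 2)⁻¹) δ := by
    simpa [one_div] using hasDerivAt_inv hδ
  have hmain : HasDerivAt (fun δ : ℝ => Ld δ n)
      (3 * (-(δ ^ 2)⁻¹) * (n * (Real.cosh (δ * n) / Real.sinh (δ * n)) - 1 / δ)
        + 3 / δ * (n * ((Real.sinh (δ * n) * n * Real.sinh (δ * n)
          - Real.cosh (δ * n) * (Real.cosh (δ * n) * n)) / Real.sinh (δ * n) ^ 2)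
          - -(δ ^ 2)⁻¹)) δ := by
    have := hinv.mul ((hq.const_mul n).sub hinv1)
    exact this
  have h2 : Real.sinh (δ * n) * n * Real.sinh (δ * n)
      - Real.cosh (δ * n) * (Real.cosh (δ * n) * n) = -n := by
    linear_combination (-n) * Real.cosh_sq_sub_sinh_sq (δ * n)
  rw [h2] at hmain
  convert hmain using 1
  unfold psi
  field_simp
  ring

theorem Ld_increases_to_sq (n : ℝ) (hn : n ≠ 0) :
    StrictAntiOn (fun δ : ℝ => Ld δ n) (Set.Ioi (0 : ℝ)) ∧
    Tendsto (fun δ : ℝ => Ld δ n) (nhdsWithin 0 (Set.Ioi 0)) (nhds (n ^ 2)) := by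
  constructor
  · apply strictAntiOn_of_deriv_neg (convex_Ioi 0)
    · intro δ hδ
      have hδ0 : (0:ℝ) < δ := hδ
      exact (hasDerivAt_Ld n hδ0.ne' (mul_ne_zero hδ0.ne' hn)).continuousAt.continuousWithinAt
    · intro δ hδ
      rw [interior_Ioi] at hδ
      have hδ0 : (0:ℝ) < δ := hδ
      have htn : δ * n ≠ 0 := mul_ne_zero hδ0.ne' hn
      rw [(hasDerivAt_Ld n hδ0.ne' htn).deriv]
      apply div_neg_of_neg_of_pos
      · have := psi_neg htn; linarith
      · have := sinh_ne htn; positivity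
  · -- limit part
    have hB : Tendsto (fun t : ℝ => Real.sinh t / t) (nhdsWithin 0 {(0:ℝ)}ᶜ) (nhds 1) := by
      have h := Real.hasDerivAt_sinh 0
      rw [hasDerivAt_iff_tendsto_slope] at h
      have e : slope Real.sinh 0 = fun t : ℝ => Real.sinh t / t := by
        funext t; simp [slope_def_field]
      rw [e, Real.cosh_zero] at h
      exact h
    have hA : Tendsto (fun t : ℝ => (t * Real.cosh t - Real.sinh t) / t ^ 3)
        (nhdsWithin 0 {(0:ℝ)}ᶜ) (nhds (1/3)) := by
      apply HasDerivAt.lhopital_zero_nhdsNE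
        (f' := fun t => t * Real.sinh t) (g' := fun t => 3 * t ^ 2)
      · filter_upwards with x
        have hd : HasDerivAt (fun t : ℝ => t * Real.cosh t - Real.sinh t)
            (1 * Real.cosh x + x * Real.sinh x - Real.cosh x) x :=
          ((hasDerivAt_id x).mul (Real.hasDerivAt_cosh x)).sub (Real.hasDerivAt_sinh x)
        convert hd using 1; ring
      · filter_upwards with x
        simpa using hasDerivAt_pow 3 x
      · filter_upwards [self_mem_nhdsWithin] with x hx
        have hx0 : x ≠ 0 := hx
        positivity
      · apply tendsto_nhdsWithin_of_tendsto_nhds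
        have hct : ContinuousAt (fun t : ℝ => t * Real.cosh t - Real.sinh t) 0 := by fun_prop
        have := hct.tendsto
        simpa using this
      · apply tendsto_nhdsWithin_of_tendsto_nhds
        have hct : ContinuousAt (fun t : ℝ => t ^ 3) 0 := by fun_prop
        have := hct.tendsto
        simpa using this
      · have h1 : Tendsto (fun t : ℝ => Real.sinh t / t / 3) (nhdsWithin 0 {(0:ℝ)}ᶜ)
            (nhds (1/3)) := by
          simpa using hB.div_const 3
        apply h1.congr'
        filter_upwards [self_mem_nhdsWithin] with x hx
        have hx0 : x ≠ 0 := hx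
        field_simp
    have hG : Tendsto (fun t : ℝ => (t * Real.cosh t - Real.sinh t) / (t ^ 2 * Real.sinh t))
        (nhdsWithin 0 {(0:ℝ)}ᶜ) (nhds (1/3)) := by
      have hB' : Tendsto (fun t : ℝ => (Real.sinh t / t)⁻¹) (nhdsWithin 0 {(0:ℝ)}ᶜ)
          (nhds 1⁻¹) := hB.inv₀ one_ne_zero
      have := hA.mul hB'
      rw [show (1:ℝ)/3 * 1⁻¹ = 1/3 by norm_num] at this
      apply this.congr'
      filter_upwards [self_mem_nhdsWithin] with x hx
      have hx0 : x ≠ 0 := hx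
      have hs := sinh_ne hx0
      field_simp
    have hcomp : Tendsto (fun δ : ℝ => δ * n) (nhdsWithin 0 (Set.Ioi 0))
        (nhdsWithin 0 {(0:ℝ)}ᶜ) := by
      rw [tendsto_nhdsWithin_iff]
      constructor
      · have : Tendsto (fun δ : ℝ => δ * n) (nhds 0) (nhds (0 * n)) :=
          (continuous_mul_right n).tendsto 0
        rw [zero_mul] at this
        exact this.mono_left nhdsWithin_le_nhds
      · filter_upwards [self_mem_nhdsWithin] with δ hδ
        exact mul_ne_zero (ne_of_gt hδ) hn
    have hfin := (hG.comp hcomp).const_mul (3 * n ^ 2)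
    rw [show 3 * n ^ 2 * (1/3) = n ^ 2 by ring] at hfin
    apply hfin.congr'
    filter_upwards [self_mem_nhdsWithin] with δ hδ
    have hδ0 : (0:ℝ) < δ := hδ
    have htn : δ * n ≠ 0 := mul_ne_zero hδ0.ne' hn
    have hs := sinh_ne htn
    simp only [Function.comp]
    unfold Ld rcoth
    field_simp
end

section
/- For every δ > 0: if |n| ≥ 1/δ then |p_δ(n)| ∼ n², |p_δ'(n)| ∼ |n| and |p_δ''(n)| ∼ 1; if 0 < |n| ≤ 1/δ then |p_δ(n)| ∼ δ|n|³, |p_δ'(n)| ∼ δn² and |p_δ''(n)| ∼ δ|n|, with implicit constants independent of δ and n. -/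
open Real

noncomputable def pd (δ n : ℝ) : ℝ := n * (n * rcoth (δ * n) - 1 / δ)


/-- helper: nonneg on [0,B] from derivative -/
lemma pdX_nonneg_Icc {f f' : ℝ → ℝ} {B : ℝ}
    (hd : ∀ y, HasDerivAt f (f' y) y) (h0 : f 0 = 0)
    (h' : ∀ y, 0 ≤ y → y ≤ B → 0 ≤ f' y) {y : ℝ} (hy0 : 0 ≤ y) (hyB : y ≤ B) :
    0 ≤ f y := by
  have hm : MonotoneOn f (Set.Icc 0 B) :=
    monotoneOn_of_deriv_nonneg (convex_Icc 0 B)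
      (fun x _ => (hd x).continuousAt.continuousWithinAt)
      (fun x _ => (hd x).differentiableAt.differentiableWithinAt)
      (fun x hx => by
        rw [(hd x).deriv]
        rw [interior_Icc] at hx
        exact h' x hx.1.le hx.2.le)
  have hB : (0:ℝ) ≤ B := le_trans hy0 hyB
  calc (0:ℝ) = f 0 := h0.symm
    _ ≤ f y := hm ⟨le_refl 0, hB⟩ ⟨hy0, hyB⟩ hy0

lemma pdX_nonneg_Ici {f f' : ℝ → ℝ}
    (hd : ∀ y, HasDerivAt f (f' y) y) (h0 : f 0 = 0)
    (h' : ∀ y, 0 ≤ y → 0 ≤ f' y) {y : ℝ} (hy0 : 0 ≤ y) :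
    0 ≤ f y := by
  have hm : MonotoneOn f (Set.Ici 0) :=
    monotoneOn_of_deriv_nonneg (convex_Ici 0)
      (fun x _ => (hd x).continuousAt.continuousWithinAt)
      (fun x _ => (hd x).differentiableAt.differentiableWithinAt)
      (fun x hx => by
        rw [(hd x).deriv]
        rw [interior_Ici] at hx
        exact h' x hx.le)
  calc (0:ℝ) = f 0 := h0.symm
    _ ≤ f y := hm (Set.mem_Ici.mpr (le_refl 0)) hy0 hy0

lemma pdX_cosh_lower {y : ℝ} (hy : 0 ≤ y) : 1 + y^2/2 ≤ Real.cosh y := by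
  have hd : ∀ t : ℝ, HasDerivAt (fun t => Real.cosh t - (1 + t^2/2)) (Real.sinh t - t) t := by
    intro t
    have h1 : HasDerivAt (fun t : ℝ => 1 + t^2/2) (0 + 2*t^(2-1)/2) t :=
      (hasDerivAt_const t (1:ℝ)).add ((hasDerivAt_pow 2 t).div_const 2)
    have := (Real.hasDerivAt_cosh t).sub h1
    convert this using 1 <;> (try rfl); norm_num [id_eq]; try ring
  have := pdX_nonneg_Ici hd (by simp) (fun t ht => by
    have := Real.self_le_sinh_iff.mpr ht; linarith) hy
  linarith

lemma pdX_sinh_lower {y : ℝ} (hy : 0 ≤ y) : y + y^3/6 ≤ Real.sinh y := by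
  have hd : ∀ t : ℝ, HasDerivAt (fun t => Real.sinh t - (t + t^3/6)) (Real.cosh t - (1 + t^2/2)) t := by
    intro t
    have h1 : HasDerivAt (fun t : ℝ => t + t^3/6) (1 + 3*t^(3-1)/6) t :=
      (hasDerivAt_id t).add ((hasDerivAt_pow 3 t).div_const 6)
    have := (Real.hasDerivAt_sinh t).sub h1
    convert this using 1 <;> (try rfl); norm_num [id_eq]; try ring
  have := pdX_nonneg_Ici hd (by simp) (fun t ht => by
    have := pdX_cosh_lower ht; linarith) hy
  linarith

/-- sinh y ≤ y cosh y for y ≥ 0 -/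
lemma pdX_sinh_le_mul_cosh {y : ℝ} (hy : 0 ≤ y) : Real.sinh y ≤ y * Real.cosh y := by
  have hd : ∀ t : ℝ, HasDerivAt (fun t => t * Real.cosh t - Real.sinh t) (t * Real.sinh t) t := by
    intro t
    have := ((hasDerivAt_id t).mul (Real.hasDerivAt_cosh t)).sub (Real.hasDerivAt_sinh t)
    convert this using 1 <;> (try rfl); norm_num [id_eq]; try ring
  have := pdX_nonneg_Ici hd (by simp) (fun t ht => mul_nonneg ht (Real.sinh_nonneg_iff.mpr ht)) hy
  linarith

lemma pdX_xcosh_sub_sinh_lower {y : ℝ} (hy : 0 ≤ y) : y^3/3 ≤ y * Real.cosh y - Real.sinh y := by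
  have hd : ∀ t : ℝ, HasDerivAt (fun t => t * Real.cosh t - Real.sinh t - t^3/3)
      (t * Real.sinh t - t^2) t := by
    intro t
    have := (((hasDerivAt_id t).mul (Real.hasDerivAt_cosh t)).sub (Real.hasDerivAt_sinh t)).sub
      ((hasDerivAt_pow 3 t).div_const 3)
    convert this using 1 <;> (try rfl); norm_num [id_eq]; try ring
  have := pdX_nonneg_Ici hd (by simp) (fun t ht => by
    have h1 := Real.self_le_sinh_iff.mpr ht
    nlinarith) hy
  linarith

lemma pdX_xcosh_sub_sinh_upper {y : ℝ} (hy : 0 ≤ y) :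
    y * Real.cosh y - Real.sinh y ≤ y^3/3 * Real.cosh y := by
  have hd : ∀ t : ℝ, HasDerivAt (fun t => t^3/3 * Real.cosh t - (t * Real.cosh t - Real.sinh t))
      (t^2 * Real.cosh t + t^3/3 * Real.sinh t - t * Real.sinh t) t := by
    intro t
    have := (((hasDerivAt_pow 3 t).div_const 3).mul (Real.hasDerivAt_cosh t)).sub
      (((hasDerivAt_id t).mul (Real.hasDerivAt_cosh t)).sub (Real.hasDerivAt_sinh t))
    convert this using 1 <;> (try rfl); norm_num [id_eq]; try ring
  have := pdX_nonneg_Ici hd (by simp) (fun t ht => by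
    have h1 := pdX_sinh_le_mul_cosh ht
    have h2 := Real.sinh_nonneg_iff.mpr ht
    nlinarith [mul_le_mul_of_nonneg_left h1 ht, mul_nonneg (mul_nonneg ht (mul_nonneg ht ht)) h2]) hy
  linarith

lemma pdX_cosh_le_two {y : ℝ} (hy0 : 0 ≤ y) (hy1 : y ≤ 1) : Real.cosh y ≤ 2 := by
  rw [Real.cosh_eq]
  have h1 : Real.exp y ≤ Real.exp 1 := Real.exp_le_exp.mpr hy1
  have h2 : Real.exp 1 < 2.7182818286 := Real.exp_one_lt_d9
  have h3 : Real.exp (-y) ≤ 1 := Real.exp_le_one_iff.mpr (by linarith)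
  linarith

lemma pdX_sinh_le_two_mul {y : ℝ} (hy0 : 0 ≤ y) (hy1 : y ≤ 1) : Real.sinh y ≤ 2*y := by
  have h1 := pdX_sinh_le_mul_cosh hy0
  have h2 := pdX_cosh_le_two hy0 hy1
  nlinarith

lemma pdX_cosh_upper1 {y : ℝ} (hy0 : 0 ≤ y) (hy1 : y ≤ 1) : Real.cosh y ≤ 1 + y^2 := by
  have hd : ∀ t : ℝ, HasDerivAt (fun t => 1 + t^2 - Real.cosh t) (2*t - Real.sinh t) t := by
    intro t
    have := (((hasDerivAt_const t (1:ℝ)).add (hasDerivAt_pow 2 t))).sub (Real.hasDerivAt_cosh t)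
    convert this using 1 <;> (try rfl); norm_num [id_eq]; try ring
  have := pdX_nonneg_Icc hd (by simp) (fun t ht0 ht1 => by
    have := pdX_sinh_le_two_mul ht0 ht1; linarith) hy0 hy1
  linarith

lemma pdX_sinh_upper1 {y : ℝ} (hy0 : 0 ≤ y) (hy1 : y ≤ 1) : Real.sinh y ≤ y + y^3/3 := by
  have hd : ∀ t : ℝ, HasDerivAt (fun t => t + t^3/3 - Real.sinh t) (1 + t^2 - Real.cosh t) t := by
    intro t
    have := ((hasDerivAt_id t).add ((hasDerivAt_pow 3 t).div_const 3)).sub (Real.hasDerivAt_sinh t)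
    convert this using 1 <;> (try rfl); norm_num [id_eq]; try ring
  have := pdX_nonneg_Icc hd (by simp) (fun t ht0 ht1 => by
    have := pdX_cosh_upper1 ht0 ht1; linarith) hy0 hy1
  linarith

lemma pdX_cosh_upper2 {y : ℝ} (hy0 : 0 ≤ y) (hy1 : y ≤ 1) : Real.cosh y ≤ 1 + y^2/2 + y^4/12 := by
  have hd : ∀ t : ℝ, HasDerivAt (fun t => 1 + t^2/2 + t^4/12 - Real.cosh t)
      (t + t^3/3 - Real.sinh t) t := by
    intro t
    have := (((hasDerivAt_const t (1:ℝ)).add ((hasDerivAt_pow 2 t).div_const 2)).add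
      ((hasDerivAt_pow 4 t).div_const 12)).sub (Real.hasDerivAt_cosh t)
    convert this using 1 <;> (try rfl); norm_num [id_eq]; try ring
  have := pdX_nonneg_Icc hd (by simp) (fun t ht0 ht1 => by
    have := pdX_sinh_upper1 ht0 ht1; linarith) hy0 hy1
  linarith

lemma pdX_sinh_upper2 {y : ℝ} (hy0 : 0 ≤ y) (hy1 : y ≤ 1) :
    Real.sinh y ≤ y + y^3/6 + y^5/36 := by
  have hd : ∀ t : ℝ, HasDerivAt (fun t => t + t^3/6 + t^5/36 - Real.sinh t)
      (1 + t^2/2 + 5*t^4/36 - Real.cosh t) t := by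
    intro t
    have := (((hasDerivAt_id t).add ((hasDerivAt_pow 3 t).div_const 6)).add
      ((hasDerivAt_pow 5 t).div_const 36)).sub (Real.hasDerivAt_sinh t)
    convert this using 1 <;> (try rfl); norm_num [id_eq]; try ring
  have := pdX_nonneg_Icc hd (by simp) (fun t ht0 ht1 => by
    have := pdX_cosh_upper2 ht0 ht1; nlinarith [pow_nonneg ht0 4]) hy0 hy1
  linarith

noncomputable def pdNN (y : ℝ) : ℝ := 2*y*Real.cosh y*Real.sinh y - y^2 - Real.sinh y^2

lemma pdX_hasDerivAt_NN (y : ℝ) : HasDerivAt pdNN (4*y*Real.sinh y^2) y := by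
  have h1 : HasDerivAt (fun t : ℝ => 2*t) 2 y := by
    simpa using (hasDerivAt_id y).const_mul (2:ℝ)
  have h2 := (h1.mul (Real.hasDerivAt_cosh y)).mul (Real.hasDerivAt_sinh y)
  have h3 := (h2.sub (hasDerivAt_pow 2 y)).sub ((Real.hasDerivAt_sinh y).pow 2)
  convert h3 using 1 <;> (try rfl)
  norm_num
  linear_combination (-2*y) * Real.cosh_sq_sub_sinh_sq y

lemma pdX_NN_lower {y : ℝ} (hy : 0 ≤ y) : y^4 ≤ pdNN y := by
  have hd : ∀ t : ℝ, HasDerivAt (fun t => pdNN t - t^4) (4*t*Real.sinh t^2 - 4*t^3) t := by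
    intro t
    have := (pdX_hasDerivAt_NN t).sub (hasDerivAt_pow 4 t)
    convert this using 1 <;> (try rfl); try norm_num; try ring
  have := pdX_nonneg_Ici hd (by simp [pdNN]) (fun t ht => by
    have h1 := Real.self_le_sinh_iff.mpr ht
    have h2 : t^2 ≤ Real.sinh t^2 := by nlinarith
    nlinarith [mul_le_mul_of_nonneg_left h2 (by linarith : (0:ℝ) ≤ 4*t)]) hy
  linarith

lemma pdX_NN_upper1 {y : ℝ} (hy0 : 0 ≤ y) (hy1 : y ≤ 1) : pdNN y ≤ 4*y^4 := by
  have hd : ∀ t : ℝ, HasDerivAt (fun t => 4*t^4 - pdNN t) (16*t^3 - 4*t*Real.sinh t^2) t := by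
    intro t
    have := ((hasDerivAt_pow 4 t).const_mul (4:ℝ)).sub (pdX_hasDerivAt_NN t)
    convert this using 1 <;> (try rfl); try norm_num; try ring
  have := pdX_nonneg_Icc hd (by simp [pdNN]) (fun t ht0 ht1 => by
    have h1 := pdX_sinh_le_two_mul ht0 ht1
    have h2 := Real.sinh_nonneg_iff.mpr ht0
    have h3 : Real.sinh t^2 ≤ 4*t^2 := by nlinarith
    nlinarith [mul_le_mul_of_nonneg_left h3 (by linarith : (0:ℝ) ≤ 4*t)]) hy0 hy1
  linarith

lemma pdX_NN_upper2 {y : ℝ} (hy0 : 0 ≤ y) (hy1 : y ≤ 1) :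
    pdNN y ≤ y^4 + (2/9)*y^6 + (1/20)*y^8 := by
  have hd : ∀ t : ℝ, HasDerivAt (fun t => t^4 + (2/9)*t^6 + (1/20)*t^8 - pdNN t)
      (4*t^3 + (4/3)*t^5 + (2/5)*t^7 - 4*t*Real.sinh t^2) t := by
    intro t
    have := (((hasDerivAt_pow 4 t).add ((hasDerivAt_pow 6 t).const_mul (2/9:ℝ))).add
      ((hasDerivAt_pow 8 t).const_mul (1/20:ℝ))).sub (pdX_hasDerivAt_NN t)
    convert this using 1 <;> (try rfl); try norm_num; try ring
  have := pdX_nonneg_Icc hd (by simp [pdNN]) (fun t ht0 ht1 => by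
    have h1 := pdX_sinh_upper2 ht0 ht1
    have h2 := Real.sinh_nonneg_iff.mpr ht0
    have h3 : Real.sinh t^2 ≤ (t + t^3/6 + t^5/36)^2 := by nlinarith
    have h4 : (t + t^3/6 + t^5/36)^2 ≤ t^2 + t^4/3 + t^6/10 := by nlinarith [pow_nonneg ht0 6, pow_le_pow_of_le_one ht0 ht1 (by norm_num : 6 ≤ 8), pow_le_pow_of_le_one ht0 ht1 (by norm_num : 6 ≤ 10)]
    nlinarith [mul_le_mul_of_nonneg_left (h3.trans h4) (by linarith : (0:ℝ) ≤ 4*t)]) hy0 hy1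
  linarith

noncomputable def pdGG (y : ℝ) : ℝ := y^2 * (Real.cosh y / Real.sinh y) - y
noncomputable def pdG1 (y : ℝ) : ℝ := pdNN y / Real.sinh y ^ 2
noncomputable def pdG2 (y : ℝ) : ℝ := 4*y - 2 * pdNN y * Real.cosh y / Real.sinh y ^ 3

lemma pdX_GG_eq {y : ℝ} (hy : y ≠ 0) :
    pdGG y = y * (y * Real.cosh y - Real.sinh y) / Real.sinh y := by
  have hs : Real.sinh y ≠ 0 := Real.sinh_ne_zero.mpr hy
  unfold pdGG; field_simp

lemma pdX_GG_lo {y : ℝ} (h0 : 0 < y) (h1 : y ≤ 1) : y^3/6 ≤ pdGG y ∧ pdGG y ≤ y^3 := by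
  have hs : 0 < Real.sinh y := Real.sinh_pos_iff.mpr h0
  rw [pdX_GG_eq h0.ne']
  have hl5 := pdX_xcosh_sub_sinh_lower h0.le
  have hl6 := pdX_xcosh_sub_sinh_upper h0.le
  have hu1 := pdX_cosh_le_two h0.le h1
  have hu2 := pdX_sinh_le_two_mul h0.le h1
  have hl1 := Real.self_le_sinh_iff.mpr h0.le
  constructor
  · rw [le_div_iff₀ hs]
    nlinarith [mul_le_mul_of_nonneg_left hu2 (by positivity : (0:ℝ) ≤ y^3/6),
      mul_le_mul_of_nonneg_left hl5 h0.le]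
  · rw [div_le_iff₀ hs]
    nlinarith [mul_le_mul_of_nonneg_left hl6 h0.le, pow_nonneg h0.le 3,
      mul_le_mul_of_nonneg_left hl1 (by positivity : (0:ℝ) ≤ y^3),
      mul_le_mul_of_nonneg_left hu1 (by positivity : (0:ℝ) ≤ y^4/3)]

lemma pdX_G1_lo {y : ℝ} (h0 : 0 < y) (h1 : y ≤ 1) : y^2/4 ≤ pdG1 y ∧ pdG1 y ≤ 4*y^2 := by
  have hs : 0 < Real.sinh y := Real.sinh_pos_iff.mpr h0
  have hs2 : 0 < Real.sinh y^2 := by positivity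
  have hNl := pdX_NN_lower h0.le
  have hNu := pdX_NN_upper1 h0.le h1
  have hu2 := pdX_sinh_le_two_mul h0.le h1
  have hl1 := Real.self_le_sinh_iff.mpr h0.le
  unfold pdG1
  constructor
  · rw [le_div_iff₀ hs2]
    have h2 : Real.sinh y^2 ≤ 4*y^2 := by nlinarith
    nlinarith [mul_le_mul_of_nonneg_left h2 (by positivity : (0:ℝ) ≤ y^2/4)]
  · rw [div_le_iff₀ hs2]
    have h2 : y^2 ≤ Real.sinh y^2 := by nlinarith
    nlinarith [mul_le_mul_of_nonneg_left h2 (by positivity : (0:ℝ) ≤ 4*y^2)]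

lemma pdX_G2_lo {y : ℝ} (h0 : 0 < y) (h1 : y ≤ 1) : y ≤ pdG2 y ∧ pdG2 y ≤ 4*y := by
  refine ⟨?_, ?_⟩
  swap
  · have hs : 0 < Real.sinh y := Real.sinh_pos_iff.mpr h0
    have hN0 : 0 ≤ pdNN y := le_trans (by positivity) (pdX_NN_lower h0.le)
    have h2 : 0 ≤ 2 * pdNN y * Real.cosh y / Real.sinh y^3 := by positivity
    unfold pdG2; linarith
  have hs : 0 < Real.sinh y := Real.sinh_pos_iff.mpr h0
  have hs3 : 0 < Real.sinh y^3 := by positivity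
  have hc : 0 < Real.cosh y := Real.cosh_pos y
  have hNu := pdX_NN_upper2 h0.le h1
  have hcu := pdX_cosh_upper2 h0.le h1
  have hsl := pdX_sinh_lower h0.le
  have hN0 : 0 ≤ pdNN y := le_trans (by positivity) (pdX_NN_lower h0.le)
  have hq : 2 * pdNN y * Real.cosh y / Real.sinh y^3 ≤ 3*y := by
    rw [div_le_iff₀ hs3]
    have hA : 2 * pdNN y * Real.cosh y ≤
        2*(y^4 + (2/9)*y^6 + (1/20)*y^8)*(1 + y^2/2 + y^4/12) := by
      gcongr
    have hs3' : (y + y^3/6)^3 ≤ Real.sinh y^3 :=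
      pow_le_pow_left₀ (by positivity) hsl 3
    have hpoly : 2*(y^4 + (2/9)*y^6 + (1/20)*y^8)*(1 + y^2/2 + y^4/12) ≤ 3*y*(y + y^3/6)^3 := by
      nlinarith [pow_le_pow_of_le_one h0.le h1 (by norm_num : 4 ≤ 8),
        pow_le_pow_of_le_one h0.le h1 (by norm_num : 4 ≤ 10),
        pow_le_pow_of_le_one h0.le h1 (by norm_num : 4 ≤ 12),
        pow_nonneg h0.le 4]
    calc 2 * pdNN y * Real.cosh y ≤ 3*y*(y + y^3/6)^3 := le_trans hA hpoly
      _ ≤ 3*y*Real.sinh y^3 := by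
          have := mul_le_mul_of_nonneg_left hs3' (by positivity : (0:ℝ) ≤ 3*y)
          linarith
      _ = 3*y*Real.sinh y^3 := rfl
  unfold pdG2
  linarith

lemma pdX_sinh_two_le : Real.sinh 2 ≤ 4 := by
  rw [Real.sinh_eq]
  have h1 : Real.exp 2 = Real.exp 1 * Real.exp 1 := by rw [← Real.exp_add]; norm_num
  have h2 : Real.exp 1 < 2.7182818286 := Real.exp_one_lt_d9
  have h3 : 0 < Real.exp (-2 : ℝ) := Real.exp_pos _
  have h4 : 0 < Real.exp 1 := Real.exp_pos 1
  nlinarith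

lemma pdX_hi_facts {y : ℝ} (h1 : 1 ≤ y) :
    7/6 * y ≤ Real.sinh y ∧ Real.sinh y ≤ Real.cosh y ∧ Real.cosh y ≤ 2 * Real.sinh y := by
  have h0 : 0 ≤ y := by linarith
  have hsl := pdX_sinh_lower h0
  have hy3 : y ≤ y^3 := by nlinarith [mul_nonneg (mul_nonneg (by linarith : (0:ℝ) ≤ y) (by linarith : (0:ℝ) ≤ y - 1)) (by linarith : (0:ℝ) ≤ y + 1)]
  have hA : 7/6 * y ≤ Real.sinh y := by nlinarith
  have hs1 : 1 ≤ Real.sinh y := by nlinarith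
  have he : Real.cosh y - Real.sinh y = Real.exp (-y) := Real.cosh_sub_sinh y
  have he1 : Real.exp (-y) ≤ 1 := Real.exp_le_one_iff.mpr (by linarith)
  have he0 : 0 < Real.exp (-y) := Real.exp_pos _
  exact ⟨hA, by linarith, by linarith⟩

lemma pdX_GG_hi {y : ℝ} (h1 : 1 ≤ y) : y^2/12 ≤ pdGG y ∧ pdGG y ≤ 2*y^2 := by
  have h0 : 0 < y := by linarith
  have hs : 0 < Real.sinh y := Real.sinh_pos_iff.mpr h0
  obtain ⟨h76, hsc, hc2s⟩ := pdX_hi_facts h1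
  rw [pdX_GG_eq h0.ne']
  constructor
  · rw [le_div_iff₀ hs]
    rcases le_total y 2 with hy2 | hy2
    · have hs4 : Real.sinh y ≤ 4 := le_trans (Real.sinh_le_sinh.mpr hy2) pdX_sinh_two_le
      have hl5 := pdX_xcosh_sub_sinh_lower h0.le
      have hy24 : y^2 ≤ y^4 := by nlinarith [mul_le_mul h1 h1 (by linarith) (by linarith)]
      nlinarith [mul_le_mul_of_nonneg_left hl5 h0.le,
        mul_le_mul_of_nonneg_left hs4 (by positivity : (0:ℝ) ≤ y^2/12)]
    · nlinarith [mul_le_mul_of_nonneg_left hsc (by positivity : (0:ℝ) ≤ y^2),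
        mul_pos h0 hs]
  · rw [div_le_iff₀ hs]
    nlinarith [mul_le_mul_of_nonneg_left hc2s (by positivity : (0:ℝ) ≤ y^2)]

lemma pdX_G1_hi {y : ℝ} (h1 : 1 ≤ y) : 13/49 * y ≤ pdG1 y ∧ pdG1 y ≤ 4*y := by
  have h0 : 0 < y := by linarith
  have hs : 0 < Real.sinh y := Real.sinh_pos_iff.mpr h0
  have hs2 : 0 < Real.sinh y^2 := by positivity
  obtain ⟨h76, hsc, hc2s⟩ := pdX_hi_facts h1
  have h36 : y^2 ≤ 36/49 * Real.sinh y^2 := by nlinarith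
  unfold pdG1 pdNN
  constructor
  · rw [le_div_iff₀ hs2]
    have hA : 2*y*Real.sinh y^2 ≤ 2*y*(Real.cosh y*Real.sinh y) := by nlinarith [mul_le_mul_of_nonneg_left hsc (by positivity : (0:ℝ) ≤ 2*y*Real.sinh y)]
    nlinarith [mul_nonneg (sub_nonneg.mpr h1) (sq_nonneg (Real.sinh y))]
  · rw [div_le_iff₀ hs2]
    nlinarith [mul_le_mul_of_nonneg_left hc2s (by positivity : (0:ℝ) ≤ 2*y*Real.sinh y)]

lemma pdX_G2_alt {y : ℝ} (hy : y ≠ 0) :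
    pdG2 y = (2*Real.cosh y*Real.sinh y^2 - 4*y*Real.sinh y + 2*y^2*Real.cosh y)/Real.sinh y^3 := by
  have hs : Real.sinh y ≠ 0 := Real.sinh_ne_zero.mpr hy
  unfold pdG2 pdNN
  field_simp
  linear_combination (-4*y*Real.sinh y) * Real.cosh_sq_sub_sinh_sq y

lemma pdX_G2_hi {y : ℝ} (h1 : 1 ≤ y) : 26/49 ≤ pdG2 y ∧ pdG2 y ≤ 7 := by
  have h0 : 0 < y := by linarith
  have hs : 0 < Real.sinh y := Real.sinh_pos_iff.mpr h0
  have hs3 : 0 < Real.sinh y^3 := by positivity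
  obtain ⟨h76, hsc, hc2s⟩ := pdX_hi_facts h1
  have h36 : y^2 ≤ 36/49 * Real.sinh y^2 := by nlinarith
  rw [pdX_G2_alt h0.ne']
  constructor
  · rw [le_div_iff₀ hs3]
    rcases le_total y 2 with hy2 | hy2
    · nlinarith [mul_le_mul_of_nonneg_left hsc (by positivity : (0:ℝ) ≤ 2*Real.sinh y^2),
        mul_le_mul_of_nonneg_left hsc (by positivity : (0:ℝ) ≤ 2*y^2),
        mul_le_mul_of_nonneg_left h36 (by positivity : (0:ℝ) ≤ 36/49 * Real.sinh y),
        mul_pos h0 hs, mul_nonneg (mul_nonneg h0.le h0.le) hs.le]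
    · nlinarith [mul_le_mul_of_nonneg_left hsc (by positivity : (0:ℝ) ≤ 2*Real.sinh y^2),
        mul_le_mul_of_nonneg_left hsc (by positivity : (0:ℝ) ≤ 2*y^2),
        mul_nonneg (mul_nonneg h0.le (sub_nonneg.mpr hy2)) hs.le]
  · rw [div_le_iff₀ hs3]
    nlinarith [mul_le_mul_of_nonneg_left hc2s (by positivity : (0:ℝ) ≤ 2*Real.sinh y^2),
      mul_le_mul_of_nonneg_left hc2s (by positivity : (0:ℝ) ≤ 2*y^2),
      mul_le_mul_of_nonneg_left h36 (by positivity : (0:ℝ) ≤ 4*Real.sinh y),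
      mul_pos h0 hs]
lemma pdX_pd_eq {δ n : ℝ} (hδ : δ ≠ 0) (hn : n ≠ 0) : pd δ n = pdGG (δ*n) / δ^2 := by
  have hs : Real.sinh (δ*n) ≠ 0 := Real.sinh_ne_zero.mpr (by exact mul_ne_zero hδ hn)
  unfold pd rcoth pdGG
  field_simp

lemma pdX_hasDerivAt_pd {δ n : ℝ} (hδ : δ ≠ 0) (hn : n ≠ 0) :
    HasDerivAt (pd δ) (pdG1 (δ*n) / δ) n := by
  have hs : Real.sinh (δ*n) ≠ 0 := Real.sinh_ne_zero.mpr (mul_ne_zero hδ hn)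
  have hlin : HasDerivAt (fun m : ℝ => δ*m) δ n := by
    simpa using (hasDerivAt_id n).const_mul δ
  have hcosh : HasDerivAt (fun m : ℝ => Real.cosh (δ*m)) (Real.sinh (δ*n) * δ) n :=
    (Real.hasDerivAt_cosh (δ*n)).comp n hlin
  have hsinh : HasDerivAt (fun m : ℝ => Real.sinh (δ*m)) (Real.cosh (δ*n) * δ) n :=
    (Real.hasDerivAt_sinh (δ*n)).comp n hlin
  have hq := hcosh.div hsinh hs
  have hin := ((hasDerivAt_id n).mul hq).sub_const (1/δ)
  have houter := (hasDerivAt_id n).mul hin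
  have hfun : pd δ = fun m : ℝ =>
      m * (m * (Real.cosh (δ*m) / Real.sinh (δ*m)) - 1/δ) := rfl
  rw [hfun]
  convert houter using 1 <;> (try rfl)
  unfold pdG1 pdNN
  simp only [id_eq, Pi.mul_apply, Pi.div_apply]
  field_simp
  ring_nf
  linear_combination (δ^2 * n^2) * Real.cosh_sq_sub_sinh_sq (δ*n)

lemma pdX_deriv_pd {δ n : ℝ} (hδ : δ ≠ 0) (hn : n ≠ 0) :
    deriv (pd δ) n = pdG1 (δ*n) / δ :=
  (pdX_hasDerivAt_pd hδ hn).deriv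

lemma pdX_hasDerivAt_G1 {δ n : ℝ} (hδ : δ ≠ 0) (hn : n ≠ 0) :
    HasDerivAt (fun m : ℝ => pdG1 (δ*m) / δ) (pdG2 (δ*n)) n := by
  have hs : Real.sinh (δ*n) ≠ 0 := Real.sinh_ne_zero.mpr (mul_ne_zero hδ hn)
  have hlin : HasDerivAt (fun m : ℝ => δ*m) δ n := by
    simpa using (hasDerivAt_id n).const_mul δ
  have hsinh : HasDerivAt (fun m : ℝ => Real.sinh (δ*m)) (Real.cosh (δ*n) * δ) n :=
    (Real.hasDerivAt_sinh (δ*n)).comp n hlin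
  have hNN : HasDerivAt (fun m : ℝ => pdNN (δ*m)) (4*(δ*n)*Real.sinh (δ*n)^2 * δ) n :=
    (pdX_hasDerivAt_NN (δ*n)).comp n hlin
  have hden : HasDerivAt (fun m : ℝ => Real.sinh (δ*m)^2 * δ)
      ((2 * Real.sinh (δ*n)^(2-1) * (Real.cosh (δ*n) * δ)) * δ) n :=
    (hsinh.pow 2).mul_const δ
  have hdne : Real.sinh (δ*n)^2 * δ ≠ 0 := by
    exact mul_ne_zero (pow_ne_zero 2 hs) hδ
  have hq := hNN.div hden hdne
  have hfun : (fun m : ℝ => pdG1 (δ*m) / δ) = fun m : ℝ => pdNN (δ*m) / (Real.sinh (δ*m)^2 * δ) := by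
    funext m; unfold pdG1; rw [div_div]
  rw [hfun]
  convert hq using 1 <;> (try rfl)
  unfold pdG2
  field_simp
  ring

lemma pdX_deriv2_pd {δ n : ℝ} (hδ : δ ≠ 0) (hn : n ≠ 0) :
    deriv (deriv (pd δ)) n = pdG2 (δ*n) := by
  have hev : deriv (pd δ) =ᶠ[nhds n] (fun m : ℝ => pdG1 (δ*m) / δ) := by
    have hmem : ({0}ᶜ : Set ℝ) ∈ nhds n :=
      isOpen_compl_singleton.mem_nhds (by simpa using hn)
    filter_upwards [hmem] with m hm
    exact pdX_deriv_pd hδ (by simpa using hm)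
  rw [hev.deriv_eq, (pdX_hasDerivAt_G1 hδ hn).deriv]

lemma pdX_GG_neg (y : ℝ) : pdGG (-y) = -pdGG y := by
  unfold pdGG; rw [Real.cosh_neg, Real.sinh_neg]; ring

lemma pdX_NN_neg (y : ℝ) : pdNN (-y) = pdNN y := by
  unfold pdNN; rw [Real.cosh_neg, Real.sinh_neg]; ring

lemma pdX_G1_neg (y : ℝ) : pdG1 (-y) = pdG1 y := by
  unfold pdG1; rw [pdX_NN_neg, Real.sinh_neg]; ring

lemma pdX_G2_neg (y : ℝ) : pdG2 (-y) = -pdG2 y := by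
  unfold pdG2; rw [pdX_NN_neg, Real.cosh_neg, Real.sinh_neg]; ring

lemma pdX_abs_pd {δ n : ℝ} (hδ : 0 < δ) (hn : n ≠ 0) :
    |pd δ n| = |pdGG (δ*|n|)| / δ^2 := by
  have key : |pdGG (δ*|n|)| = |pdGG (δ*n)| := by
    rcases abs_cases n with ⟨h1, _⟩ | ⟨h1, _⟩
    · rw [h1]
    · rw [h1, show δ * -n = -(δ*n) by ring, pdX_GG_neg, abs_neg]
  rw [pdX_pd_eq hδ.ne' hn, abs_div, abs_of_pos (by positivity : (0:ℝ) < δ^2), key]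

lemma pdX_abs_d1 {δ n : ℝ} (hδ : 0 < δ) (hn : n ≠ 0) :
    |deriv (pd δ) n| = |pdG1 (δ*|n|)| / δ := by
  have key : |pdG1 (δ*|n|)| = |pdG1 (δ*n)| := by
    rcases abs_cases n with ⟨h1, _⟩ | ⟨h1, _⟩
    · rw [h1]
    · rw [h1, show δ * -n = -(δ*n) by ring, pdX_G1_neg]
  rw [pdX_deriv_pd hδ.ne' hn, abs_div, abs_of_pos hδ, key]

lemma pdX_abs_d2 {δ n : ℝ} (hδ : 0 < δ) (hn : n ≠ 0) :
    |deriv (deriv (pd δ)) n| = |pdG2 (δ*|n|)| := by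
  have key : |pdG2 (δ*|n|)| = |pdG2 (δ*n)| := by
    rcases abs_cases n with ⟨h1, _⟩ | ⟨h1, _⟩
    · rw [h1]
    · rw [h1, show δ * -n = -(δ*n) by ring, pdX_G2_neg, abs_neg]
  rw [pdX_deriv2_pd hδ.ne' hn, key]

theorem pd_derivative_bounds :
    ∃ c C : ℝ, 0 < c ∧ 0 < C ∧ ∀ δ : ℝ, 0 < δ → ∀ n : ℝ,
      ((1 / δ ≤ |n| →
        (c * n ^ 2 ≤ |pd δ n| ∧ |pd δ n| ≤ C * n ^ 2) ∧
        (c * |n| ≤ |deriv (pd δ) n| ∧ |deriv (pd δ) n| ≤ C * |n|) ∧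
        (c ≤ |deriv (deriv (pd δ)) n| ∧ |deriv (deriv (pd δ)) n| ≤ C)) ∧
      (n ≠ 0 → |n| ≤ 1 / δ →
        (c * (δ * |n| ^ 3) ≤ |pd δ n| ∧ |pd δ n| ≤ C * (δ * |n| ^ 3)) ∧
        (c * (δ * n ^ 2) ≤ |deriv (pd δ) n| ∧ |deriv (pd δ) n| ≤ C * (δ * n ^ 2)) ∧
        (c * (δ * |n|) ≤ |deriv (deriv (pd δ)) n| ∧
          |deriv (deriv (pd δ)) n| ≤ C * (δ * |n|)))) := by
  refine ⟨1/12, 7, by norm_num, by norm_num, fun δ hδ n => ⟨?_, ?_⟩⟩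
  · -- high regime
    intro hge
    have hδ' : 0 < 1/δ := by positivity
    have hn : n ≠ 0 := by
      intro h; rw [h, abs_zero] at hge; linarith
    have hna : 0 < |n| := abs_pos.mpr hn
    set y := δ * |n| with hy
    have hy0 : 0 < y := by positivity
    have hy1 : 1 ≤ y := by
      rw [hy]
      calc (1:ℝ) = δ * (1/δ) := by field_simp
        _ ≤ δ * |n| := by gcongr
    have hysq : y^2 = δ^2 * n^2 := by rw [hy, mul_pow, sq_abs]
    obtain ⟨hg1, hg2⟩ := pdX_GG_hi hy1
    obtain ⟨hd1, hd2⟩ := pdX_G1_hi hy1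
    obtain ⟨he1, he2⟩ := pdX_G2_hi hy1
    have hgabs : |pdGG y| = pdGG y := abs_of_nonneg (le_trans (by positivity) hg1)
    have hdabs : |pdG1 y| = pdG1 y := abs_of_nonneg (le_trans (by positivity) hd1)
    have heabs : |pdG2 y| = pdG2 y := abs_of_nonneg (le_trans (by norm_num) he1)
    refine ⟨⟨?_, ?_⟩, ⟨?_, ?_⟩, ?_, ?_⟩
    · rw [pdX_abs_pd hδ hn, hgabs, le_div_iff₀ (by positivity : (0:ℝ) < δ^2)]
      nlinarith
    · rw [pdX_abs_pd hδ hn, hgabs, div_le_iff₀ (by positivity : (0:ℝ) < δ^2)]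
      nlinarith
    · rw [pdX_abs_d1 hδ hn, hdabs, le_div_iff₀ hδ]
      calc 1/12 * |n| * δ ≤ 13/49 * y := by rw [hy]; nlinarith
        _ ≤ pdG1 y := hd1
    · rw [pdX_abs_d1 hδ hn, hdabs, div_le_iff₀ hδ]
      calc pdG1 y ≤ 4 * y := hd2
        _ ≤ 7 * |n| * δ := by rw [hy]; nlinarith
    · rw [pdX_abs_d2 hδ hn, heabs]; linarith
    · rw [pdX_abs_d2 hδ hn, heabs]; linarith
  · -- low regime
    intro hn hle
    have hna : 0 < |n| := abs_pos.mpr hn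
    set y := δ * |n| with hy
    have hy0 : 0 < y := by positivity
    have hy1 : y ≤ 1 := by
      rw [hy]
      calc δ * |n| ≤ δ * (1/δ) := by gcongr
        _ = 1 := by field_simp
    have hysq : y^2 = δ^2 * n^2 := by rw [hy, mul_pow, sq_abs]
    have hycube : y^3 = δ^3 * |n|^3 := by rw [hy, mul_pow]
    obtain ⟨hg1, hg2⟩ := pdX_GG_lo hy0 hy1
    obtain ⟨hd1, hd2⟩ := pdX_G1_lo hy0 hy1
    obtain ⟨he1, he2⟩ := pdX_G2_lo hy0 hy1
    have hgabs : |pdGG y| = pdGG y := abs_of_nonneg (le_trans (by positivity) hg1)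
    have hdabs : |pdG1 y| = pdG1 y := abs_of_nonneg (le_trans (by positivity) hd1)
    have heabs : |pdG2 y| = pdG2 y := abs_of_nonneg (le_trans hy0.le he1)
    refine ⟨⟨?_, ?_⟩, ⟨?_, ?_⟩, ?_, ?_⟩
    · rw [pdX_abs_pd hδ hn, hgabs, le_div_iff₀ (by positivity : (0:ℝ) < δ^2)]
      calc 1/12 * (δ * |n|^3) * δ^2 = 1/12 * y^3 := by rw [hycube]; ring
        _ ≤ pdGG y := by linarith
    · rw [pdX_abs_pd hδ hn, hgabs, div_le_iff₀ (by positivity : (0:ℝ) < δ^2)]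
      calc pdGG y ≤ y^3 := hg2
        _ ≤ 7 * (δ * |n|^3) * δ^2 := by rw [hycube]; nlinarith [pow_pos hδ 3, pow_pos hna 3]
    · rw [pdX_abs_d1 hδ hn, hdabs, le_div_iff₀ hδ]
      calc 1/12 * (δ * n^2) * δ = 1/12 * y^2 := by rw [hysq]; ring
        _ ≤ pdG1 y := by linarith
    · rw [pdX_abs_d1 hδ hn, hdabs, div_le_iff₀ hδ]
      calc pdG1 y ≤ 4 * y^2 := hd2
        _ ≤ 7 * (δ * n^2) * δ := by rw [show 7 * (δ * n^2) * δ = 7 * y^2 by rw [hysq]; ring]; nlinarith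
    · rw [pdX_abs_d2 hδ hn, heabs]
      calc 1/12 * (δ * |n|) = 1/12 * y := by rw [hy]
        _ ≤ pdG2 y := by linarith
    · rw [pdX_abs_d2 hδ hn, heabs]
      calc pdG2 y ≤ 4 * y := he2
        _ ≤ 7 * (δ * |n|) := by rw [← hy]; linarith
end

section
/- For 0 < δ, γ ≤ ∞ and all integers n and reals τ, the modulation weights of the ILW dispersions with different depths satisfy ⟨τ − p_δ(n)⟩ ≲ ⟨τ − p_γ(n)⟩ + (1/δ + 1/γ)⟨n⟩, with implicit constant independent of δ, γ, n, τ. -/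
open Real

/-- ILW dispersion with depth `δ ∈ (0, ∞]`; `δ = ∞` gives the Benjamin–Ono symbol `n|n|`. -/
noncomputable def pExt (δ : ENNReal) (n : ℝ) : ℝ :=
  if δ = ⊤ then n * |n| else n * (n * rcoth (δ.toReal * n) - 1 / δ.toReal)

noncomputable def jb (x : ℝ) : ℝ := Real.sqrt (1 + x ^ 2)

lemma sinh_pos' {x : ℝ} (hx : 0 < x) : 0 < Real.sinh x := Real.sinh_pos_iff.2 hx

lemma sinh_le_cosh' (x : ℝ) : Real.sinh x ≤ Real.cosh x := by
  rw [Real.sinh_eq, Real.cosh_eq]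
  have := Real.exp_pos (-x); linarith

lemma rcoth_ge_one {x : ℝ} (hx : 0 < x) : 1 ≤ rcoth x := by
  have hs : 0 < Real.sinh x := sinh_pos' hx
  have hc : Real.sinh x ≤ Real.cosh x := sinh_le_cosh' x
  rw [rcoth, le_div_iff₀ hs]; linarith

lemma mul_rcoth_le {x : ℝ} (hx : 0 < x) : x * rcoth x ≤ x + 1 := by
  have hs : 0 < Real.sinh x := sinh_pos' hx
  rw [rcoth, ← mul_div_assoc, div_le_iff₀ hs]
  -- x * cosh x ≤ (x+1) * sinh x
  have h1 : 2 * x + 1 ≤ Real.exp (2 * x) := Real.add_one_le_exp (2 * x)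
  have hcs : Real.cosh x = Real.sinh x + Real.exp (-x) := by
    rw [Real.cosh_eq, Real.sinh_eq]; ring
  rw [hcs]
  have hsinh : Real.sinh x = (Real.exp x - Real.exp (-x)) / 2 := Real.sinh_eq x
  have he : Real.exp (2 * x) = Real.exp x * Real.exp x := by
    rw [← Real.exp_add]; ring_nf
  have hepos : 0 < Real.exp (-x) := Real.exp_pos _
  have hinv : Real.exp (-x) * Real.exp x = 1 := by
    rw [← Real.exp_add]; simp
  -- need x * (sinh x + exp(-x)) ≤ (x+1) * sinh x, i.e. x * exp(-x) ≤ sinh x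
  have key : x * Real.exp (-x) ≤ Real.sinh x := by
    rw [hsinh, le_div_iff₀ (by norm_num : (0:ℝ) < 2)]
    have := mul_le_mul_of_nonneg_left h1 hepos.le
    nlinarith [hinv]
  nlinarith

lemma even_mul_rcoth (d x : ℝ) : (-x) * rcoth (d * (-x)) = x * rcoth (d * x) := by
  have : rcoth (d * (-x)) = - rcoth (d * x) := by
    rw [rcoth, rcoth, mul_neg, Real.cosh_neg, Real.sinh_neg, div_neg]
  rw [this]; ring

lemma mul_rcoth_bounds {d : ℝ} (hd : 0 < d) (x : ℝ) :
    |x| ≤ x * rcoth (d * x) ∧ x * rcoth (d * x) ≤ |x| + 1 / d := by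
  -- reduce to x ≥ 0
  have main : ∀ y : ℝ, 0 ≤ y → y ≤ y * rcoth (d * y) ∧ y * rcoth (d * y) ≤ y + 1 / d := by
    intro y hy
    rcases eq_or_lt_of_le hy with h | h
    · have h0 : (0:ℝ) ≤ 1 / d := by positivity
      simp [← h]
      linarith
    · have hdy : 0 < d * y := mul_pos hd h
      refine ⟨?_, ?_⟩
      · nlinarith [rcoth_ge_one hdy]
      · have hdd : d * (1 / d) = 1 := by field_simp
        nlinarith [mul_rcoth_le hdy]
  rcases le_or_gt 0 x with h | h
  · rw [abs_of_nonneg h]; exact main x h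
  · rw [abs_of_neg h]
    have := main (-x) (by linarith)
    rw [even_mul_rcoth d x] at this
    exact this

lemma pext_diff_bo {δ : ENNReal} (hδ : δ ≠ 0) (x : ℝ) :
    abs (pExt δ x - x * |x|) ≤ |x| * (δ⁻¹).toReal := by
  rcases eq_or_ne δ ⊤ with h | h
  · simp [pExt, h, abs_nonneg]
  · have hd : 0 < δ.toReal := ENNReal.toReal_pos hδ h
    have hinv : (δ⁻¹).toReal = 1 / δ.toReal := by
      rw [ENNReal.toReal_inv, one_div]
    rw [pExt, if_neg h, hinv]
    obtain ⟨h1, h2⟩ := mul_rcoth_bounds hd x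
    have : x * (x * rcoth (δ.toReal * x) - 1 / δ.toReal) - x * |x|
        = x * ((x * rcoth (δ.toReal * x) - |x|) - 1 / δ.toReal) := by ring
    rw [this, abs_mul]
    have hb : abs ((x * rcoth (δ.toReal * x) - |x|) - 1 / δ.toReal) ≤ 1 / δ.toReal := by
      rw [abs_le]
      exact ⟨by linarith, by linarith⟩
    exact mul_le_mul_of_nonneg_left hb (abs_nonneg x)

lemma jb_lipschitz (a b : ℝ) : jb a ≤ jb b + |a - b| := by
  have hb : 0 ≤ jb b := Real.sqrt_nonneg _
  have hb2 : (jb b) ^ 2 = 1 + b ^ 2 := Real.sq_sqrt (by positivity)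
  have habs : |b| ≤ jb b := by
    rw [jb, ← Real.sqrt_sq_eq_abs]
    exact Real.sqrt_le_sqrt (by nlinarith)
  have hsq : 1 + a ^ 2 ≤ (jb b + |a - b|) ^ 2 := by
    have h1 : b * (a - b) ≤ |b| * |a - b| := by
      calc b * (a - b) ≤ |b * (a - b)| := le_abs_self _
        _ = |b| * |a - b| := abs_mul _ _
    nlinarith [abs_nonneg (a - b), sq_abs (a - b)]
  calc jb a = Real.sqrt (1 + a ^ 2) := rfl
    _ ≤ Real.sqrt ((jb b + |a - b|) ^ 2) := Real.sqrt_le_sqrt hsq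
    _ = jb b + |a - b| := Real.sqrt_sq (by positivity)

lemma abs_le_jb (x : ℝ) : |x| ≤ jb x := by
  rw [jb, ← Real.sqrt_sq_eq_abs]
  exact Real.sqrt_le_sqrt (by nlinarith)

lemma jb_nonneg (x : ℝ) : 0 ≤ jb x := Real.sqrt_nonneg _

theorem modulation_comparison :
    ∃ C : ℝ, 0 < C ∧ ∀ δ γ : ENNReal, δ ≠ 0 → γ ≠ 0 →
      ∀ n : ℤ, ∀ τ : ℝ,
        jb (τ - pExt δ (n : ℝ)) ≤
          C * (jb (τ - pExt γ (n : ℝ)) + (δ⁻¹ + γ⁻¹).toReal * jb (n : ℝ)) := by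
  refine ⟨1, one_pos, fun δ γ hδ hγ n τ => ?_⟩
  have hδt : δ⁻¹ ≠ ⊤ := by simpa using hδ
  have hγt : γ⁻¹ ≠ ⊤ := by simpa using hγ
  have hsum : (δ⁻¹ + γ⁻¹).toReal = (δ⁻¹).toReal + (γ⁻¹).toReal :=
    ENNReal.toReal_add hδt hγt
  set x : ℝ := (n : ℝ)
  have hdiff : abs (pExt δ x - pExt γ x) ≤ (δ⁻¹ + γ⁻¹).toReal * |x| := by
    have h1 := pext_diff_bo hδ x
    have h2 := pext_diff_bo hγ x
    calc abs (pExt δ x - pExt γ x)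
        ≤ abs (pExt δ x - x * |x|) + abs (x * |x| - pExt γ x) := abs_sub_le _ _ _
      _ = abs (pExt δ x - x * |x|) + abs (pExt γ x - x * |x|) := by
          rw [abs_sub_comm (x * |x|)]
      _ ≤ |x| * (δ⁻¹).toReal + |x| * (γ⁻¹).toReal := add_le_add h1 h2
      _ = (δ⁻¹ + γ⁻¹).toReal * |x| := by rw [hsum]; ring
  have hlip : jb (τ - pExt δ x) ≤ jb (τ - pExt γ x) + abs (pExt δ x - pExt γ x) := by
    have h := jb_lipschitz (τ - pExt δ x) (τ - pExt γ x)
    have he : abs ((τ - pExt δ x) - (τ - pExt γ x)) = abs (pExt δ x - pExt γ x) := by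
      rw [abs_sub_comm]; ring_nf
    rw [he] at h; exact h
  have habs := abs_le_jb x
  have hc : 0 ≤ (δ⁻¹ + γ⁻¹).toReal := ENNReal.toReal_nonneg
  have : (δ⁻¹ + γ⁻¹).toReal * |x| ≤ (δ⁻¹ + γ⁻¹).toReal * jb x :=
    mul_le_mul_of_nonneg_left habs hc
  linarith
end

section
/- Let {ω_N}_{N dyadic} be an increasing sequence of positive numbers with ω_N ≤ ω_{2N} ≤ κ·ω_N for all N ≥ 1 (κ > 1) and ω_N → ∞. Then for any 1 < κ' < κ there exists a dyadic sequence {ω̃_N} with ω̃_N ≤ ω_N, ω̃_N ≤ ω̃_{2N} ≤ κ'·ω̃_N for all N ≥ 1, and ω̃_N → ∞. -/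
open Filter

noncomputable def freqEnvAux (ω : ℕ → ℝ) (κ' : ℝ) : ℕ → ℝ
  | 0 => ω 0
  | (k + 1) => min (ω (k + 1)) (κ' * freqEnvAux ω κ' k)

/-- Frequency envelope lemma: the sequence is indexed by the dyadic exponent,
`ω k` standing for `ω_{2^k}`. -/
theorem frequency_envelope_refinement (ω : ℕ → ℝ) (κ : ℝ) (hκ : 1 < κ)
    (hpos : ∀ k, 0 < ω k)
    (hmono : ∀ k, ω k ≤ ω (k + 1))
    (hdbl : ∀ k, ω (k + 1) ≤ κ * ω k)
    (hlim : Tendsto ω atTop atTop) :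
    ∀ κ' : ℝ, 1 < κ' → κ' < κ →
      ∃ ω' : ℕ → ℝ, (∀ k, 0 < ω' k) ∧ (∀ k, ω' k ≤ ω k) ∧
        (∀ k, ω' k ≤ ω' (k + 1)) ∧ (∀ k, ω' (k + 1) ≤ κ' * ω' k) ∧
        Tendsto ω' atTop atTop := by
  intro κ' hκ'1 _
  set f : ℕ → ℝ := freqEnvAux ω κ' with hf
  have hκ'0 : (0:ℝ) < κ' := lt_trans one_pos hκ'1
  have hstep : ∀ k, f (k + 1) = min (ω (k + 1)) (κ' * f k) := fun k => rfl
  have hfpos : ∀ k, 0 < f k := by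
    intro k
    induction k with
    | zero => exact hpos 0
    | succ n ih => rw [hstep]; exact lt_min (hpos (n + 1)) (mul_pos hκ'0 ih)
  have hfle : ∀ k, f k ≤ ω k := by
    intro k
    cases k with
    | zero => exact le_refl _
    | succ n => rw [hstep]; exact min_le_left _ _
  have hfmono : ∀ k, f k ≤ f (k + 1) := by
    intro k
    rw [hstep]
    refine le_min ((hfle k).trans (hmono k)) ?_
    nlinarith [hfpos k]
  have hmonoF : Monotone f := monotone_nat_of_le_succ hfmono
  refine ⟨f, hfpos, hfle, hfmono, fun k => (min_le_right _ _), ?_⟩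
  refine tendsto_atTop_atTop_of_monotone hmonoF ?_
  intro M
  set M' : ℝ := max M 1 with hM'
  have hM'pos : (0:ℝ) < M' := lt_of_lt_of_le one_pos (le_max_right _ _)
  obtain ⟨K, hK⟩ := (tendsto_atTop.mp hlim (κ' * M')).exists_forall_of_atTop
  -- key: for all n, min M' (κ'^n * f K) ≤ f (K + n)
  have key : ∀ n, min M' (κ' ^ n * f K) ≤ f (K + n) := by
    intro n
    induction n with
    | zero => simpa using min_le_right M' (f K)
    | succ n ih =>
      have hω : κ' * M' ≤ ω (K + n + 1) := hK (K + n + 1) (by omega)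
      have : f (K + (n + 1)) = min (ω (K + n + 1)) (κ' * f (K + n)) := by
        have : K + (n + 1) = (K + n) + 1 := by omega
        rw [this, hstep]
      rw [this]
      refine le_min ?_ ?_
      · calc min M' (κ' ^ (n + 1) * f K) ≤ M' := min_le_left _ _
          _ ≤ κ' * M' := by nlinarith
          _ ≤ ω (K + n + 1) := hω
      · calc min M' (κ' ^ (n + 1) * f K)
            ≤ κ' * min M' (κ' ^ n * f K) := by
              rcases le_total M' (κ' ^ n * f K) with h | h
              · have h1 : min M' (κ' ^ n * f K) = M' := min_eq_left h
                rw [h1]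
                calc min M' (κ' ^ (n+1) * f K) ≤ M' := min_le_left _ _
                  _ ≤ κ' * M' := by nlinarith
              · have h1 : min M' (κ' ^ n * f K) = κ' ^ n * f K := min_eq_right h
                rw [h1]
                calc min M' (κ' ^ (n+1) * f K) ≤ κ' ^ (n+1) * f K :=
                    min_le_right _ _
                  _ = κ' * (κ' ^ n * f K) := by ring
          _ ≤ κ' * f (K + n) := by nlinarith [hfpos (K + n)]
  -- choose n with M' ≤ κ'^n * f K
  obtain ⟨n, hn⟩ := pow_unbounded_of_one_lt (M' / f K) hκ'1
  have hn' : M' ≤ κ' ^ n * f K := by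
    rw [div_lt_iff₀ (hfpos K)] at hn
    linarith
  refine ⟨K + n, ?_⟩
  have := key n
  rw [min_eq_left hn'] at this
  exact le_trans (le_max_left M 1) this
end
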